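/- arXiv:1505.06455 — 2 statements merged into one kernel-verified Lean document; each statement's English description precedes it below -/
import Mathlib

section
/- Let Z ⊆ ℚ be the localization ℤ_(p) = { r/s ∈ ℚ : p does not divide s }. Then the set of p-divisible elements p·ℤ_(p) is dense and codense in ℤ_(p) with respect to the order topology: every nonempty open interval of ℤ_(p) contains both a p-divisible element and a non-p-divisible element. Consequently, the infinite definable set p·ℤ_(p) has empty interior in ℤ_(p). -/
open Set

/-- Auxiliary: the denominator of `(a : ℚ)/(b : ℚ)` for integers `a b` divides `b`. -/
lemma aux_den_dvd (a b : ℤ) : (((a : ℚ) / (b : ℚ)).den : ℤ) ∣ b := by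
  rw [← Rat.divInt_eq_div]
  exact Rat.den_dvd a b

/-- In `ℤ_(p) = {q : ℚ | p ∤ q.den}`, the set of `p`-divisible elements is dense and
codense: every nonempty open interval of `ℤ_(p)` contains both a `p`-divisible element
of `ℤ_(p)` and an element of `ℤ_(p)` that is not `p`-divisible in `ℤ_(p)`. -/
theorem stmt_8 (p : ℕ) (hp : p.Prime) :
    ∀ a b : ℚ, a < b →
      (∃ q : ℚ, ¬ p ∣ q.den ∧ a < q ∧ q < b ∧
        ∃ r : ℚ, ¬ p ∣ r.den ∧ q = (p : ℚ) * r) ∧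
      (∃ q : ℚ, ¬ p ∣ q.den ∧ a < q ∧ q < b ∧
        ¬ ∃ r : ℚ, ¬ p ∣ r.den ∧ q = (p : ℚ) * r) := by
  intro a b hab
  have hpQ : (1:ℚ) < p := by exact_mod_cast hp.one_lt
  have hba : (0:ℚ) < b - a := sub_pos.mpr hab
  set x : ℚ := (p + 1) / (b - a) with hx
  set n : ℕ := (⌈x⌉).toNat with hn
  set t : ℕ := n * p + 1 with ht
  -- p does not divide t
  have htp : ¬ p ∣ t := by
    intro h
    have h2 : p ∣ n * p := ⟨n, mul_comm n p⟩
    have h3 : p ∣ 1 := by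
      have := (Nat.dvd_sub h h2)
      simpa [ht] using this
    exact hp.one_lt.ne' (Nat.dvd_one.mp h3)
  have htQ : (0:ℚ) < t := by positivity
  -- x < t
  have hxt : x < (t : ℚ) := by
    have h1 : x ≤ (⌈x⌉ : ℚ) := Int.le_ceil x
    have h2 : (⌈x⌉ : ℚ) ≤ (n : ℚ) := by
      exact_mod_cast Int.self_le_toNat ⌈x⌉
    have h3 : (n : ℚ) + 1 ≤ (t : ℚ) := by
      have : n + 1 ≤ t := by
        have : n * 1 ≤ n * p := Nat.mul_le_mul_left n hp.one_lt.le
        omega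
      exact_mod_cast this
    linarith
  -- gap estimate : (p+1)/t < b - a
  have hgap : ((p : ℚ) + 1) < (b - a) * t := by
    have := (div_lt_iff₀ hba).mp hxt
    calc ((p:ℚ) + 1) = x * (b - a) := by rw [hx]; field_simp
    _ < t * (b - a) := by exact mul_lt_mul_of_pos_right hxt hba
    _ = (b - a) * t := by ring
  clear_value t
  clear_value n
  set m : ℤ := ⌊a * t / p⌋ + 1 with hm
  have hpQ0 : (0:ℚ) < p := by linarith
  -- a * t < m * p
  have hmQ1 : a * (t:ℚ) / p < (m : ℚ) := by
    rw [hm]; push_cast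
    linarith [Int.lt_floor_add_one (a * t / p)]
  have hmQ2 : (m : ℚ) ≤ a * (t:ℚ) / p + 1 := by
    rw [hm]; push_cast
    linarith [Int.floor_le (a * t / p)]
  clear_value m
  have hmlow : a * t < (m : ℚ) * p := by
    calc a * t = a * t / p * p := by field_simp
    _ < (m : ℚ) * p := mul_lt_mul_of_pos_right hmQ1 hpQ0
  have hmhigh : (m : ℚ) * p ≤ a * t + p := by
    calc (m : ℚ) * p ≤ (a * t / p + 1) * p := mul_le_mul_of_nonneg_right hmQ2 hpQ0.le
    _ = a * t + p := by field_simp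
  have hden : ∀ z : ℤ, ¬ p ∣ ((z : ℚ) / (t : ℚ)).den := by
    intro z h
    exact htp (Int.ofNat_dvd.mp ((Int.natCast_dvd_natCast.mpr h).trans (aux_den_dvd z t)))
  constructor
  · -- divisible element : q = (m*p)/t
    refine ⟨((m * p : ℤ) : ℚ) / t, ?_, ?_, ?_, ((m : ℤ) : ℚ) / t, ?_, ?_⟩
    · exact hden (m * p)
    · rw [lt_div_iff₀ htQ]; push_cast; linarith
    · rw [div_lt_iff₀ htQ]; push_cast; linarith
    · exact hden m
    · push_cast; ring
  · -- non-divisible element : q = (m*p+1)/t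
    refine ⟨((m * p + 1 : ℤ) : ℚ) / t, ?_, ?_, ?_, ?_⟩
    · exact hden (m * p + 1)
    · rw [lt_div_iff₀ htQ]; push_cast; linarith
    · rw [div_lt_iff₀ htQ]; push_cast; linarith
    · rintro ⟨r, hrd, hqr⟩
      have hrden : (0:ℚ) < (r.den : ℚ) := by positivity
      have hrnd : r = (r.num : ℚ) / (r.den : ℚ) := (Rat.num_div_den r).symm
      rw [hrnd] at hqr
      field_simp at hqr
      have hZ : (m * p + 1) * (r.den : ℤ) = (p : ℤ) * r.num * t := by
        have hQ : ((m * p + 1 : ℤ) : ℚ) * ((r.den : ℤ) : ℚ)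
            = ((p : ℤ) : ℚ) * ((r.num : ℤ) : ℚ) * ((t : ℤ) : ℚ) := by
          push_cast at hqr ⊢
          linarith [hqr]
        exact_mod_cast hQ
      have hpZ : Prime (p : ℤ) := Nat.prime_iff_prime_int.mp hp
      have hdvd : (p : ℤ) ∣ (m * p + 1) * (r.den : ℤ) := ⟨r.num * t, by rw [hZ]; ring⟩
      rcases hpZ.dvd_mul.mp hdvd with h | h
      · have h1 : (p : ℤ) ∣ m * p := ⟨m, mul_comm m p⟩
        have h2 : (p : ℤ) ∣ 1 := (Int.dvd_add_right h1).mp h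
        have h3 := Int.le_of_dvd one_pos h2
        have h4 : (1:ℤ) < p := by exact_mod_cast hp.one_lt
        omega
      · exact hrd (Int.ofNat_dvd.mp h)
end

section
/- Let (M, <, P) be a linear order with a unary predicate, let I be a linear order without endpoints, and let (a_i)_{i ∈ I} be a sequence in M that is order-indiscernible for the language {<, P} over ∅ (i.e., for any two increasing tuples of indices of the same length, the corresponding tuples of elements satisfy the same quantifier-free {<,P}-formulas). Let c ∈ M with a_i < c for all i ∈ I. Then for any i < j in I and any finite sequence of subsets S_1, ..., S_k each equal to P or its complement: if there exist e_1 < ... < e_k with a_i < e_1, e_k < c, and e_l ∈ S_l for each l, then there exist e'_1 < ... < e'_k with a_j < e'_1, e'_k < c, and e'_l ∈ S_l for each l. -/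
set_option linter.unnecessarySimpa false


open Set

/-- Let `(M, <, P)` be a linear order with a unary predicate, `I` a linear order with no
greatest element, and `(a_i)` an increasing `{<,P}`-indiscernible sequence (expressed via
the sign-sequence realization condition) with `a_i < c` for all `i`.  Then any finite
sign sequence over `{P, Pᶜ}` realized by an increasing chain strictly between `a_i` and `c`
(for `i < j`) is also realized strictly between `a_j` and `c`. -/
theorem stmt_13 {M I : Type*} [LinearOrder M] [LinearOrder I] [NoMaxOrder I]
    (P : Set M) (a : I → M) (c : M)
    (hmono : StrictMono a)
    (hc : ∀ i : I, a i < c)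
    -- indiscernibility: realization of a sign sequence between `a i` and `a j`
    -- depends only on having `i < j`
    (hind : ∀ (i j i' j' : I), i < j → i' < j' →
      ∀ (k : ℕ) (ε : Fin k → Bool),
        ((∃ e : Fin k → M, StrictMono e ∧ (∀ l, a i < e l ∧ e l < a j) ∧
            ∀ l, e l ∈ P ↔ ε l = true) ↔
          (∃ e : Fin k → M, StrictMono e ∧ (∀ l, a i' < e l ∧ e l < a j') ∧
            ∀ l, e l ∈ P ↔ ε l = true))) :
    ∀ i j : I, i < j → ∀ (k : ℕ) (ε : Fin k → Bool),
      (∃ e : Fin k → M, StrictMono e ∧ (∀ l, a i < e l ∧ e l < c) ∧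
        ∀ l, e l ∈ P ↔ ε l = true) →
      (∃ e : Fin k → M, StrictMono e ∧ (∀ l, a j < e l ∧ e l < c) ∧
        ∀ l, e l ∈ P ↔ ε l = true) := by
  intro i j hij k ε ⟨e, hemono, hbd, hsign⟩
  obtain ⟨ℓ, hℓ⟩ := exists_gt j
  set S : Finset (Fin k) := Finset.univ.filter (fun l => e l < a ℓ) with hS
  set m := S.card with hm
  have hmk : m ≤ k := by
    calc m ≤ Finset.univ.card := Finset.card_filter_le _ _
    _ = k := by simp
  have key : ∀ l : Fin k, e l < a ℓ ↔ (l : ℕ) < m := by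
    intro l
    constructor
    · intro h
      have hsub : Finset.Iic l ⊆ S := by
        intro l' hl'
        rw [Finset.mem_Iic] at hl'
        simp only [hS, Finset.mem_filter, Finset.mem_univ, true_and]
        exact lt_of_le_of_lt (hemono.monotone hl') h
      have h1 : (Finset.Iic l).card ≤ m := Finset.card_le_card hsub
      rw [Fin.card_Iic] at h1
      omega
    · intro h
      by_contra hcon
      push_neg at hcon
      have hsub : S ⊆ Finset.Iio l := by
        intro l' hl'
        simp only [hS, Finset.mem_filter, Finset.mem_univ, true_and] at hl'
        rw [Finset.mem_Iio]
        by_contra h2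
        push_neg at h2
        exact absurd hl' (not_lt.mpr (le_trans hcon (hemono.monotone h2)))
      have h1 : m ≤ (Finset.Iio l).card := Finset.card_le_card hsub
      rw [Fin.card_Iio] at h1
      omega
  -- the initial segment of the chain lies strictly between a i and a ℓ
  have hhead : ∃ f : Fin m → M, StrictMono f ∧ (∀ l, a j < f l ∧ f l < a ℓ) ∧
      ∀ l, f l ∈ P ↔ ε (Fin.castLE hmk l) = true := by
    refine (hind i ℓ j ℓ (hij.trans hℓ) hℓ m (fun l => ε (Fin.castLE hmk l))).mp
      ⟨fun l => e (Fin.castLE hmk l), ?_, ?_, ?_⟩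
    · intro l1 l2 h
      exact hemono (by simp only [Fin.lt_def, Fin.coe_castLE]; exact h)
    · intro l
      refine ⟨(hbd _).1, ?_⟩
      exact (key _).mpr (by simpa using l.2)
    · intro l
      exact hsign _
  obtain ⟨f, hfmono, hfbd, hfsign⟩ := hhead
  refine ⟨fun l => if h : (l : ℕ) < m then f ⟨l, h⟩ else e l, ?_, ?_, ?_⟩
  · intro l1 l2 hlt
    rcases lt_or_ge (l1 : ℕ) m with h1 | h1 <;> rcases lt_or_ge (l2 : ℕ) m with h2 | h2
    · simp only [dif_pos h1, dif_pos h2]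
      exact hfmono (show ((⟨l1, h1⟩ : Fin m)) < ⟨l2, h2⟩ from hlt)
    · simp only [dif_pos h1, dif_neg (not_lt.mpr h2)]
      have := (hfbd ⟨l1, h1⟩).2
      have h3 : a ℓ ≤ e l2 := not_lt.mp (fun hh => absurd ((key l2).mp hh) (not_lt.mpr h2))
      exact lt_of_lt_of_le this h3
    · exact absurd hlt (not_lt.mpr (le_of_lt (by rw [Fin.lt_def]; omega)))
    · simp only [dif_neg (not_lt.mpr h1), dif_neg (not_lt.mpr h2)]
      exact hemono hlt
  · intro l
    by_cases h : (l : ℕ) < m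
    · simp only [dif_pos h]
      exact ⟨(hfbd _).1, lt_trans (hfbd _).2 (hc ℓ)⟩
    · simp only [dif_neg h]
      have h3 : a ℓ ≤ e l := not_lt.mp (fun hh => h ((key l).mp hh))
      exact ⟨lt_of_lt_of_le (hmono hℓ) h3, (hbd l).2⟩
  · intro l
    by_cases h : (l : ℕ) < m
    · simp only [dif_pos h]
      have := hfsign ⟨l, h⟩
      simpa [Fin.castLE, Fin.ext_iff] using this
    · simp only [dif_neg h]
      exact hsign l
end
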